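/- Let α, β ∈ ℝ with α ≠ 0 and β ≠ 0. For every natural number n ≥ 1, there exist finite sets A, B ⊆ ℝ and a set G ⊆ A × B such that |G| = 2n², |A ·_G B| ≤ n, and |(A + α) ·_G (B + β)| ≤ n. In particular, max{|A ·_G B|, |(A + α) ·_G (B + β)|} ≤ |G|^(1/2) / √2, so the restricted sum set is genuinely needed in the lower bound for max{|A +_G B|, |A ·_G B|, |(A + α) ·_G (B + β)|}. -/

import Mathlib

/-- All three sets are needed in the variant: for `α, β ≠ 0` and every `n ≥ 1`
there exist `A, B ⊆ ℝ` and `G ⊆ A × B` with `|G| = 2n²`, `|A ·_G B| ≤ n` and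
`|(A+α) ·_G (B+β)| ≤ n`; in particular
`max {|A ·_G B|, |(A+α) ·_G (B+β)|} ≤ |G|^(1/2)/√2`. -/
theorem shifted_products_construction (α β : ℝ) (hα : α ≠ 0) (hβ : β ≠ 0)
    (n : ℕ) (hn : 1 ≤ n) :
    ∃ (A B : Finset ℝ) (G : Finset (ℝ × ℝ)), G ⊆ A ×ˢ B ∧
      G.card = 2 * n ^ 2 ∧
      (G.image (fun p => p.1 * p.2)).card ≤ n ∧
      (G.image (fun p => (p.1 + α) * (p.2 + β))).card ≤ n ∧
      ((max (G.image (fun p => p.1 * p.2)).card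
            (G.image (fun p => (p.1 + α) * (p.2 + β))).card : ℕ) : ℝ) ≤
        (G.card : ℝ) ^ ((1 : ℝ) / 2) / Real.sqrt 2 := by
  classical
  have hαβ : α * β ≠ 0 := mul_ne_zero hα hβ
  set s : ℕ → ℝ := fun i => -(α*β)*((i:ℝ)+1) with hsdef
  set t : ℕ → ℝ := fun j => (j:ℝ) with htdef
  set u : ℕ → ℕ → ℝ := fun i j => t j - s i - α*β with hudef
  set D : ℕ → ℕ → ℝ := fun i j => u i j ^ 2 + 4*(α*β)^2*((i:ℝ)+1) with hDdef
  have hD : ∀ i j, 0 < D i j := by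
    intro i j
    have h1 : (0:ℝ) < 4*(α*β)^2*((i:ℝ)+1) := by positivity
    have h2 : (0:ℝ) ≤ u i j ^ 2 := sq_nonneg _
    simp only [hDdef]; linarith
  set aa : ℕ → ℕ → Bool → ℝ :=
    fun i j ε => (u i j + (if ε then 1 else -1) * Real.sqrt (D i j))/(2*β) with haadef
  set bb : ℕ → ℕ → Bool → ℝ := fun i j ε => (u i j - β * aa i j ε)/α with hbbdef
  -- key algebraic identities
  have hmul : ∀ i j ε, aa i j ε * bb i j ε = s i := by
    intro i j ε
    have hr : Real.sqrt (D i j) ^ 2 = u i j ^ 2 + 4*(α*β)^2*((i:ℝ)+1) := by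
      rw [Real.sq_sqrt (hD i j).le]
    cases ε <;>
    · simp only [haadef, hbbdef, hsdef, if_true, if_false, Bool.false_eq_true]
      field_simp
      linear_combination (-1 : ℝ) * hr
  have hshift : ∀ i j ε, (aa i j ε + α) * (bb i j ε + β) = t j := by
    intro i j ε
    have h1 := hmul i j ε
    have h2 : α * bb i j ε = u i j - β * aa i j ε := by
      simp only [hbbdef]; field_simp
    have : (aa i j ε + α) * (bb i j ε + β)
        = aa i j ε * bb i j ε + (β * aa i j ε + α * bb i j ε) + α*β := by ring
    rw [this, h1, h2]
    simp only [hudef]; ring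
  have hsinj : ∀ i i' : ℕ, s i = s i' → i = i' := by
    intro i i' h
    simp only [hsdef] at h
    have h2 : ((i:ℝ)+1) = ((i':ℝ)+1) := mul_left_cancel₀ (neg_ne_zero.mpr hαβ) h
    exact_mod_cast (by linarith : (i:ℝ) = (i':ℝ))
  set F : ℕ × ℕ × Bool → ℝ × ℝ :=
    fun x => (aa x.1 x.2.1 x.2.2, bb x.1 x.2.1 x.2.2) with hFdef
  set dom : Finset (ℕ × ℕ × Bool) :=
    (Finset.range n) ×ˢ (Finset.range n) ×ˢ (Finset.univ : Finset Bool) with hdomdef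
  set G : Finset (ℝ × ℝ) := dom.image F with hGdef
  set A : Finset ℝ := G.image Prod.fst with hAdef
  set B : Finset ℝ := G.image Prod.snd with hBdef
  have hFinj : Set.InjOn F ↑dom := by
    intro x _ y _ hxy
    have ha : aa x.1 x.2.1 x.2.2 = aa y.1 y.2.1 y.2.2 := congrArg Prod.fst hxy
    have hb : bb x.1 x.2.1 x.2.2 = bb y.1 y.2.1 y.2.2 := congrArg Prod.snd hxy
    have hi : x.1 = y.1 := by
      apply hsinj
      rw [← hmul x.1 x.2.1 x.2.2, ← hmul y.1 y.2.1 y.2.2, ha, hb]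
    have hj : x.2.1 = y.2.1 := by
      have : t x.2.1 = t y.2.1 := by
        rw [← hshift x.1 x.2.1 x.2.2, ← hshift y.1 y.2.1 y.2.2, ha, hb]
      simpa [htdef, Nat.cast_inj] using this
    have hε : x.2.2 = y.2.2 := by
      by_contra hne
      rw [hi, hj] at ha
      have hrpos : 0 < Real.sqrt (D y.1 y.2.1) := Real.sqrt_pos.mpr (hD _ _)
      have h2β : (2*β) ≠ 0 := by simpa using hβ
      simp only [haadef] at ha
      rw [div_eq_div_iff h2β h2β] at ha
      have ha2 := mul_right_cancel₀ h2β ha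
      cases hx : x.2.2 <;> cases hy : y.2.2 <;>
        simp [hx, hy] at ha2 hne <;> linarith
    exact Prod.ext hi (Prod.ext hj hε)
  have hGcard : G.card = 2 * n ^ 2 := by
    rw [hGdef, Finset.card_image_of_injOn hFinj, hdomdef]
    simp [Finset.card_product]
    ring
  have hmem : ∀ p ∈ G, ∃ i ∈ Finset.range n, ∃ j ∈ Finset.range n, ∃ ε : Bool,
      p = F (i, j, ε) := by
    intro p hp
    rw [hGdef] at hp
    obtain ⟨x, hx, rfl⟩ := Finset.mem_image.mp hp
    simp only [hdomdef, Finset.mem_product] at hx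
    exact ⟨x.1, hx.1, x.2.1, hx.2.1, x.2.2, rfl⟩
  have himg1 : (G.image (fun p => p.1 * p.2)) ⊆ (Finset.range n).image s := by
    intro z hz
    obtain ⟨p, hp, rfl⟩ := Finset.mem_image.mp hz
    obtain ⟨i, hi, j, hj, ε, rfl⟩ := hmem p hp
    exact Finset.mem_image.mpr ⟨i, hi, (hmul i j ε).symm⟩
  have himg2 : (G.image (fun p => (p.1 + α) * (p.2 + β))) ⊆ (Finset.range n).image t := by
    intro z hz
    obtain ⟨p, hp, rfl⟩ := Finset.mem_image.mp hz
    obtain ⟨i, hi, j, hj, ε, rfl⟩ := hmem p hp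
    exact Finset.mem_image.mpr ⟨j, hj, (hshift i j ε).symm⟩
  have hc1 : (G.image (fun p => p.1 * p.2)).card ≤ n := by
    calc _ ≤ ((Finset.range n).image s).card := Finset.card_le_card himg1
    _ ≤ (Finset.range n).card := Finset.card_image_le
    _ = n := Finset.card_range n
  have hc2 : (G.image (fun p => (p.1 + α) * (p.2 + β))).card ≤ n := by
    calc _ ≤ ((Finset.range n).image t).card := Finset.card_le_card himg2
    _ ≤ (Finset.range n).card := Finset.card_image_le
    _ = n := Finset.card_range n
  refine ⟨A, B, G, ?_, hGcard, hc1, hc2, ?_⟩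
  · intro p hp
    rw [Finset.mem_product]
    exact ⟨Finset.mem_image.mpr ⟨p, hp, rfl⟩, Finset.mem_image.mpr ⟨p, hp, rfl⟩⟩
  · have hrhs : (G.card : ℝ) ^ ((1:ℝ)/2) / Real.sqrt 2 = n := by
      rw [hGcard]
      push_cast
      rw [← Real.sqrt_eq_rpow]
      rw [Real.sqrt_mul (by norm_num : (0:ℝ) ≤ 2)]
      rw [Real.sqrt_sq (by positivity : (0:ℝ) ≤ (n:ℝ))]
      field_simp
    rw [hrhs]
    have : max (G.image (fun p => p.1 * p.2)).card
        (G.image (fun p => (p.1 + α) * (p.2 + β))).card ≤ n := max_le hc1 hc2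
    exact_mod_cast this
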